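/- Let T be the tree with vertex set {1,...,8} and edges {12,23,34,45,26,37,48}. Then the Cartesian product P_4 □ T is not Hamiltonian. -/

import Mathlib

open SimpleGraph

/-- A spanning subgraph each of whose components is a path of order at least 2. -/
def SimpleGraph.Subgraph.IsPathFactor {V : Type*} {G : SimpleGraph V} (F : G.Subgraph) : Prop :=
  F.verts = Set.univ ∧
    ∀ c : F.coe.ConnectedComponent,
      ∃ k : ℕ, 2 ≤ k ∧ Nonempty (F.coe.induce c.supp ≃g pathGraph k)

/-- `G` has a path factor. -/
def SimpleGraph.HasPathFactor {V : Type*} (G : SimpleGraph V) : Prop :=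
  ∃ F : G.Subgraph, F.IsPathFactor

/-- A spanning subgraph each of whose components is isomorphic to `P₂` or `P₃`. -/
def SimpleGraph.Subgraph.IsP2P3Factor {V : Type*} {G : SimpleGraph V} (F : G.Subgraph) : Prop :=
  F.verts = Set.univ ∧
    ∀ c : F.coe.ConnectedComponent,
      ∃ k : ℕ, (k = 2 ∨ k = 3) ∧ Nonempty (F.coe.induce c.supp ≃g pathGraph k)

/-- The number of isolated vertices of `G − S`. -/
noncomputable def SimpleGraph.numIsolatedOutside {V : Type*} (G : SimpleGraph V) (S : Set V) : ℕ :=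
  Nat.card {v : V | v ∉ S ∧ ∀ w, G.Adj v w → w ∈ S}

/-- The number of connected components of `G − S`. -/
noncomputable def SimpleGraph.numComponentsOutside {V : Type*} (G : SimpleGraph V) (S : Set V) : ℕ :=
  Nat.card (G.induce Sᶜ).ConnectedComponent

/-- `G` is 1-tough: any cut set `S` satisfies `|S| ≥ c(G − S)`. -/
def SimpleGraph.IsOneTough {V : Type*} [Fintype V] (G : SimpleGraph V) : Prop :=
  ∀ S : Finset V, 2 ≤ G.numComponentsOutside ↑S → G.numComponentsOutside ↑S ≤ S.card

/-- `G` is traceable: it has a Hamiltonian path. -/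
def SimpleGraph.Traceable {V : Type*} [DecidableEq V] (G : SimpleGraph V) : Prop :=
  ∃ (a b : V) (p : G.Walk a b), p.IsHamiltonian

/-- The tree on vertices `{1,…,8}` (relabelled as `Fin 8`, vertex `i` standing for `i+1`)
with edges `12, 23, 34, 45, 26, 37, 48`. -/
def T₁ : SimpleGraph (Fin 8) :=
  SimpleGraph.fromEdgeSet {s(0, 1), s(1, 2), s(2, 3), s(3, 4), s(1, 5), s(2, 6), s(3, 7)}

instance : DecidableRel T₁.Adj := fun v w =>
  decidable_of_iff (v ≠ w ∧ (s(v,w) = s(0,1) ∨ s(v,w) = s(1,2) ∨ s(v,w) = s(2,3) ∨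
    s(v,w) = s(3,4) ∨ s(v,w) = s(1,5) ∨ s(v,w) = s(2,6) ∨ s(v,w) = s(3,7)))
    (by rw [T₁, fromEdgeSet_adj]; simp [Set.mem_insert_iff, Set.mem_singleton_iff, and_comm])

instance : DecidableRel (pathGraph 4).Adj := fun _ _ =>
  decidable_of_iff _ (pathGraph_adj).symm

instance : DecidableRel (pathGraph 4 □ T₁).Adj := fun _ _ =>
  decidable_of_iff _ (boxProd_adj).symm

/-- A cyclic ordering of all 32 vertices of `P₄ □ T₁` with consecutive vertices adjacent. -/
structure HamCert where
  f : ZMod 32 → Fin 4 × Fin 8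
  bij : Function.Bijective f
  adj : ∀ i, (pathGraph 4 □ T₁).Adj (f i) (f (i + 1))

namespace HamCert

variable (c : HamCert)

noncomputable def idx : Fin 4 × Fin 8 → ZMod 32 := (Equiv.ofBijective c.f c.bij).symm

noncomputable def succ (v : Fin 4 × Fin 8) : Fin 4 × Fin 8 := c.f (c.idx v + 1)
noncomputable def pred (v : Fin 4 × Fin 8) : Fin 4 × Fin 8 := c.f (c.idx v - 1)

/-- `v w` is an edge of the Hamiltonian cycle. -/
def E (v w : Fin 4 × Fin 8) : Prop := c.succ v = w ∨ c.pred v = w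

lemma f_idx (v) : c.f (c.idx v) = v := (Equiv.ofBijective c.f c.bij).apply_symm_apply v

lemma idx_f (i) : c.idx (c.f i) = i := (Equiv.ofBijective c.f c.bij).symm_apply_apply i

lemma succ_f (i) : c.succ (c.f i) = c.f (i + 1) := by rw [succ, idx_f]
lemma pred_f (i) : c.pred (c.f i) = c.f (i - 1) := by rw [pred, idx_f]

lemma succ_ne_pred (v) : c.succ v ≠ c.pred v := by
  intro h
  have h2 := c.bij.1 h
  have : (2 : ZMod 32) = 0 := by linear_combination h2
  exact absurd this (by decide)

lemma E_succ (v) : c.E v (c.succ v) := Or.inl rfl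
lemma E_pred (v) : c.E v (c.pred v) := Or.inr rfl

lemma adj_of_E {v w} (h : c.E v w) : (pathGraph 4 □ T₁).Adj v w := by
  rcases h with h | h
  · have := c.adj (c.idx v); rwa [f_idx, ← succ, h] at this
  · have := c.adj (c.idx v - 1)
    rw [sub_add_cancel, f_idx, ← pred, h] at this
    exact this.symm

lemma E_symm {v w} (h : c.E v w) : c.E w v := by
  rcases h with h | h
  · right; rw [← h, pred, succ, idx_f, add_sub_cancel_right, f_idx]
  · left; rw [← h, succ, pred, idx_f, sub_add_cancel, f_idx]

lemma three {v w₁ w₂ w₃} (h₁ : c.E v w₁) (h₂ : c.E v w₂) (h₃ : c.E v w₃)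
    (d₁₂ : w₁ ≠ w₂) (d₁₃ : w₁ ≠ w₃) (d₂₃ : w₂ ≠ w₃) : False := by
  rcases h₁ with h₁ | h₁ <;> rcases h₂ with h₂ | h₂ <;> rcases h₃ with h₃ | h₃ <;> simp_all

lemma eq_of_E {v w₁ w₂ w} (h₁ : c.E v w₁) (h₂ : c.E v w₂) (hne : w₁ ≠ w₂)
    (h : c.E v w) : w = w₁ ∨ w = w₂ := by
  by_contra hc
  push_neg at hc
  exact c.three h₁ h₂ h hne hc.1.symm hc.2.symm

lemma forced {v w₁ w₂} (h : ∀ w, (pathGraph 4 □ T₁).Adj v w → w = w₁ ∨ w = w₂)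
    (hne : w₁ ≠ w₂) : c.E v w₁ ∧ c.E v w₂ := by
  have hs := h _ (c.adj_of_E (c.E_succ v))
  have hp := h _ (c.adj_of_E (c.E_pred v))
  have hsp := c.succ_ne_pred v
  rcases hs with hs | hs <;> rcases hp with hp | hp
  · exact absurd (hs.trans hp.symm) hsp
  · exact ⟨hs ▸ c.E_succ v, hp ▸ c.E_pred v⟩
  · exact ⟨hp ▸ c.E_pred v, hs ▸ c.E_succ v⟩
  · exact absurd (hs.trans hp.symm) hsp

/-- The other cycle edge at `v`. -/
lemma other {v w} (h : c.E v w) : ∃ u, c.E v u ∧ u ≠ w := by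
  rcases h with h | h
  · exact ⟨c.pred v, c.E_pred v, fun hh => c.succ_ne_pred v (h.symm ▸ hh ▸ rfl)⟩
  · exact ⟨c.succ v, c.E_succ v, fun hh => c.succ_ne_pred v (hh.trans h.symm)⟩

lemma closed (A : Set (Fin 4 × Fin 8)) (hcl : ∀ v ∈ A, c.succ v ∈ A) {v₀ w}
    (h0 : v₀ ∈ A) (hw : w ∉ A) : False := by
  have key : ∀ n : ℕ, c.f (c.idx v₀ + n) ∈ A := by
    intro n
    induction n with
    | zero => simpa [f_idx] using h0
    | succ n ih =>
      have := hcl _ ih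
      rw [succ_f] at this
      have harith : c.idx v₀ + ↑n + 1 = c.idx v₀ + ↑(n+1) := by push_cast; ring
      rwa [harith] at this
  apply hw
  have := key (c.idx w - c.idx v₀).val
  rwa [ZMod.natCast_val, ZMod.cast_id, add_sub_cancel, f_idx] at this

end HamCert

lemma getVert_inj {V : Type*} {G : SimpleGraph V} :
    ∀ {u v : V} (q : G.Walk u v), q.support.Nodup →
      ∀ i j, i ≤ q.length → j ≤ q.length → q.getVert i = q.getVert j → i = j := by
  intro u v q
  induction q with
  | nil => intro _ i j hi hj _; simp [SimpleGraph.Walk.length_nil] at hi hj; omega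
  | @cons a b d h q ih =>
    intro hnd i j hi hj hij
    rw [SimpleGraph.Walk.support_cons, List.nodup_cons] at hnd
    rw [SimpleGraph.Walk.length_cons] at hi hj
    match i, j with
    | 0, 0 => rfl
    | 0, (j+1) =>
      exfalso
      apply hnd.1
      rw [SimpleGraph.Walk.getVert_zero, SimpleGraph.Walk.getVert_cons_succ] at hij
      rw [SimpleGraph.Walk.mem_support_iff_exists_getVert]
      exact ⟨j, hij.symm, by omega⟩
    | (i+1), 0 =>
      exfalso
      apply hnd.1
      rw [SimpleGraph.Walk.getVert_zero, SimpleGraph.Walk.getVert_cons_succ] at hij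
      rw [SimpleGraph.Walk.mem_support_iff_exists_getVert]
      exact ⟨i, hij, by omega⟩
    | (i+1), (j+1) =>
      rw [SimpleGraph.Walk.getVert_cons_succ, SimpleGraph.Walk.getVert_cons_succ] at hij
      have := ih hnd.2 i j (by omega) (by omega) hij
      omega

lemma exists_cert (h : (pathGraph 4 □ T₁).IsHamiltonian) : Nonempty HamCert := by
  obtain ⟨a, p, hp⟩ := h (by simp)
  have hnil : ¬ p.Nil := hp.isCycle.not_nil
  set q := p.tail with hq
  have hqham : q.IsHamiltonian := hp.isHamiltonian_tail
  have hplen : p.length = 32 := by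
    rw [hp.length_eq]; simp
  have hlen : q.length = 31 := by
    have := SimpleGraph.Walk.length_tail_add_one hnil
    rw [hq]
    omega
  have hnodup : q.support.Nodup := hqham.isPath.support_nodup
  have hinj : Function.Injective (fun i : ZMod 32 => q.getVert i.val) := by
    intro i j hij
    have h1 : i.val = j.val :=
      getVert_inj q hnodup i.val j.val (by have := ZMod.val_lt i; omega)
        (by have := ZMod.val_lt j; omega) hij
    have : ((i.val : ℕ) : ZMod 32) = ((j.val : ℕ) : ZMod 32) := by rw [h1]
    rwa [ZMod.natCast_val, ZMod.natCast_val, ZMod.cast_id, ZMod.cast_id] at this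
  have hbij : Function.Bijective (fun i : ZMod 32 => q.getVert i.val) := by
    rw [Fintype.bijective_iff_injective_and_card]
    exact ⟨hinj, by simp⟩
  refine ⟨⟨fun i => q.getVert i.val, hbij, ?_⟩⟩
  intro i
  have hval : i.val < 32 := ZMod.val_lt i
  by_cases h31 : i.val = 31
  · have hi1 : (i + 1).val = 0 := by
      have : i = (31 : ZMod 32) := by
        have : ((i.val : ℕ) : ZMod 32) = ((31:ℕ) : ZMod 32) := by rw [h31]
        rwa [ZMod.natCast_val, ZMod.cast_id] at this
      rw [this]; rfl
    simp only [hi1, h31]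
    have h1 : q.getVert 31 = a := by
      rw [← hlen]; exact SimpleGraph.Walk.getVert_length q
    have h2 : q.getVert 0 = p.getVert 1 := by
      rw [hq]; rw [SimpleGraph.Walk.getVert_tail p]
    rw [h1, h2]
    have := p.adj_getVert_succ (i := 0) (by omega)
    rwa [SimpleGraph.Walk.getVert_zero] at this
  · have hi1 : (i + 1).val = i.val + 1 := by
      have : (i + 1).val = (i.val + 1) % 32 := by
        rw [← ZMod.val_natCast]
        congr 1
        all_goals push_cast [ZMod.natCast_val, ZMod.cast_id]
        all_goals ring
      rw [this, Nat.mod_eq_of_lt (by omega)]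
    simp only [hi1]
    exact q.adj_getVert_succ (by omega)
section Transport

/-- Transport a certificate along a graph homomorphism that is bijective. -/
def HamCert.map (c : HamCert) (φ : Fin 4 × Fin 8 → Fin 4 × Fin 8) (hb : Function.Bijective φ)
    (hφ : ∀ v w, (pathGraph 4 □ T₁).Adj v w → (pathGraph 4 □ T₁).Adj (φ v) (φ w)) : HamCert :=
  ⟨φ ∘ c.f, hb.comp c.bij, fun i => hφ _ _ (c.adj i)⟩

lemma HamCert.idx_map (c : HamCert) (φ) (hb) (hφ) (v) :
    (c.map φ hb hφ).idx (φ v) = c.idx v := by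
  apply (hb.comp c.bij).1
  show (c.map φ hb hφ).f _ = (φ ∘ c.f) _
  rw [HamCert.f_idx]
  simp only [Function.comp_apply, HamCert.f_idx]

lemma HamCert.succ_map (c : HamCert) (φ) (hb) (hφ) (v) :
    (c.map φ hb hφ).succ (φ v) = φ (c.succ v) := by
  show (c.map φ hb hφ).f ((c.map φ hb hφ).idx (φ v) + 1) = _
  rw [HamCert.idx_map]
  rfl

lemma HamCert.pred_map (c : HamCert) (φ) (hb) (hφ) (v) :
    (c.map φ hb hφ).pred (φ v) = φ (c.pred v) := by
  show (c.map φ hb hφ).f ((c.map φ hb hφ).idx (φ v) - 1) = _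
  rw [HamCert.idx_map]
  rfl

lemma HamCert.E_map (c : HamCert) (φ) (hb) (hφ) {v w} (h : (c.map φ hb hφ).E (φ v) (φ w)) :
    c.E v w := by
  rcases h with h | h
  · rw [HamCert.succ_map] at h
    exact Or.inl (hb.1 h)
  · rw [HamCert.pred_map] at h
    exact Or.inr (hb.1 h)

/-- The automorphism of `P₄ □ T₁` reflecting the tree: 0↔4, 1↔3, 5↔7, fixing 2,6. -/
def refl8 : Fin 4 × Fin 8 → Fin 4 × Fin 8 := fun v => (v.1, ![4, 3, 2, 1, 0, 7, 6, 5] v.2)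

lemma refl8_bij : Function.Bijective refl8 := by decide

lemma refl8_adj : ∀ v w, (pathGraph 4 □ T₁).Adj v w →
    (pathGraph 4 □ T₁).Adj (refl8 v) (refl8 w) := by decide

end Transport

namespace HamCert

variable (c : HamCert)

/-! Forced edges at the top and bottom of each leaf column. -/

lemma leaf0T : c.E (0,0) (1,0) ∧ c.E (0,0) (0,1) := c.forced (by decide) (by decide)
lemma leaf0B : c.E (3,0) (2,0) ∧ c.E (3,0) (3,1) := c.forced (by decide) (by decide)
lemma leaf5T : c.E (0,5) (1,5) ∧ c.E (0,5) (0,1) := c.forced (by decide) (by decide)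
lemma leaf5B : c.E (3,5) (2,5) ∧ c.E (3,5) (3,1) := c.forced (by decide) (by decide)
lemma leaf6T : c.E (0,6) (1,6) ∧ c.E (0,6) (0,2) := c.forced (by decide) (by decide)
lemma leaf4T : c.E (0,4) (1,4) ∧ c.E (0,4) (0,3) := c.forced (by decide) (by decide)
lemma leaf7T : c.E (0,7) (1,7) ∧ c.E (0,7) (0,3) := c.forced (by decide) (by decide)

/-- `(0,1)` already has its two cycle edges, towards the leaves. -/
lemma notE01 {w} (hw1 : w ≠ (0,0)) (hw2 : w ≠ (0,5)) : ¬ c.E (0,1) w := fun h =>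
  c.three (c.E_symm (c.leaf0T).2) (c.E_symm (c.leaf5T).2) h (by decide) hw1.symm hw2.symm

lemma notE31 {w} (hw1 : w ≠ (3,0)) (hw2 : w ≠ (3,5)) : ¬ c.E (3,1) w := fun h =>
  c.three (c.E_symm (c.leaf0B).2) (c.E_symm (c.leaf5B).2) h (by decide) hw1.symm hw2.symm

lemma notE03 {w} (hw1 : w ≠ (0,4)) (hw2 : w ≠ (0,7)) : ¬ c.E (0,3) w := fun h =>
  c.three (c.E_symm (c.leaf4T).2) (c.E_symm (c.leaf7T).2) h (by decide) hw1.symm hw2.symm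

/-- Pairing through leaf column 0, forward. -/
lemma pair0F (h : c.E (1,1) (1,0)) : c.E (2,1) (2,0) := by
  -- (1,0) is full with (0,0) and (1,1), so (2,0)'s second edge goes to (2,1)
  have h10 : c.E (1,0) (1,1) := c.E_symm h
  have h100 : c.E (1,0) (0,0) := c.E_symm (c.leaf0T).1
  obtain ⟨u, hu, hune⟩ := c.other (c.E_symm (c.leaf0B).1)
  have hmem : ∀ w, (pathGraph 4 □ T₁).Adj ((2:Fin 4),(0:Fin 8)) w →
      w = (1,0) ∨ w = (3,0) ∨ w = (2,1) := by decide
  rcases hmem u (c.adj_of_E hu) with rfl | rfl | rfl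
  · exact (c.three h10 h100 (c.E_symm hu) (by decide) (by decide) (by decide)).elim
  · exact absurd rfl hune
  · exact c.E_symm hu

/-- Pairing through leaf column 0, backward. -/
lemma pair0B (h : c.E (2,1) (2,0)) : c.E (1,1) (1,0) := by
  have h20 : c.E (2,0) (2,1) := c.E_symm h
  have h200 : c.E (2,0) (3,0) := c.E_symm (c.leaf0B).1
  obtain ⟨u, hu, hune⟩ := c.other (c.E_symm (c.leaf0T).1)
  have hmem : ∀ w, (pathGraph 4 □ T₁).Adj ((1:Fin 4),(0:Fin 8)) w →
      w = (0,0) ∨ w = (2,0) ∨ w = (1,1) := by decide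
  rcases hmem u (c.adj_of_E hu) with rfl | rfl | rfl
  · exact absurd rfl hune
  · exact (c.three h20 h200 (c.E_symm hu) (by decide) (by decide) (by decide)).elim
  · exact c.E_symm hu

/-- Pairing through leaf column 5, forward. -/
lemma pair5F (h : c.E (1,1) (1,5)) : c.E (2,1) (2,5) := by
  have h10 : c.E (1,5) (1,1) := c.E_symm h
  have h100 : c.E (1,5) (0,5) := c.E_symm (c.leaf5T).1
  obtain ⟨u, hu, hune⟩ := c.other (c.E_symm (c.leaf5B).1)
  have hmem : ∀ w, (pathGraph 4 □ T₁).Adj ((2:Fin 4),(5:Fin 8)) w →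
      w = (1,5) ∨ w = (3,5) ∨ w = (2,1) := by decide
  rcases hmem u (c.adj_of_E hu) with rfl | rfl | rfl
  · exact (c.three h10 h100 (c.E_symm hu) (by decide) (by decide) (by decide)).elim
  · exact absurd rfl hune
  · exact c.E_symm hu

/-- Pairing through leaf column 5, backward. -/
lemma pair5B (h : c.E (2,1) (2,5)) : c.E (1,1) (1,5) := by
  have h20 : c.E (2,5) (2,1) := c.E_symm h
  have h200 : c.E (2,5) (3,5) := c.E_symm (c.leaf5B).1
  obtain ⟨u, hu, hune⟩ := c.other (c.E_symm (c.leaf5T).1)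
  have hmem : ∀ w, (pathGraph 4 □ T₁).Adj ((1:Fin 4),(5:Fin 8)) w →
      w = (0,5) ∨ w = (2,5) ∨ w = (1,1) := by decide
  rcases hmem u (c.adj_of_E hu) with rfl | rfl | rfl
  · exact absurd rfl hune
  · exact (c.three h20 h200 (c.E_symm hu) (by decide) (by decide) (by decide)).elim
  · exact c.E_symm hu

end HamCert
namespace HamCert

variable (c : HamCert)

/-- If the row-2 rung from column 1 to column 2 is used, so is the row-1 rung. -/
lemma rb_to_ra (hb : c.E (2,1) (2,2)) : c.E (1,1) (1,2) := by
  by_contra ha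
  obtain ⟨u, hu, hune⟩ := c.other hb
  have hmem : ∀ w, (pathGraph 4 □ T₁).Adj ((2:Fin 4),(1:Fin 8)) w →
      w = (1,1) ∨ w = (3,1) ∨ w = (2,0) ∨ w = (2,5) ∨ w = (2,2) := by decide
  rcases hmem u (c.adj_of_E hu) with rfl | rfl | rfl | rfl | rfl
  · -- internal edge (2,1)-(1,1): find the second edge at (1,1)
    obtain ⟨u', hu', hune'⟩ := c.other (c.E_symm hu)
    have hmem' : ∀ w, (pathGraph 4 □ T₁).Adj ((1:Fin 4),(1:Fin 8)) w →
        w = (0,1) ∨ w = (2,1) ∨ w = (1,0) ∨ w = (1,5) ∨ w = (1,2) := by decide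
    rcases hmem' u' (c.adj_of_E hu') with rfl | rfl | rfl | rfl | rfl
    · exact c.notE01 (by decide) (by decide) (c.E_symm hu')
    · exact hune' rfl
    · exact c.three hb hu (c.pair0F hu') (by decide) (by decide) (by decide)
    · exact c.three hb hu (c.pair5F hu') (by decide) (by decide) (by decide)
    · exact ha hu'
  · exact c.notE31 (by decide) (by decide) (c.E_symm hu)
  · -- edge (2,1)-(2,0): pairing gives (1,1)-(1,0); find second edge at (1,1)
    have h11 := c.pair0B hu
    obtain ⟨u', hu', hune'⟩ := c.other h11
    have hmem' : ∀ w, (pathGraph 4 □ T₁).Adj ((1:Fin 4),(1:Fin 8)) w →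
        w = (0,1) ∨ w = (2,1) ∨ w = (1,0) ∨ w = (1,5) ∨ w = (1,2) := by decide
    rcases hmem' u' (c.adj_of_E hu') with rfl | rfl | rfl | rfl | rfl
    · exact c.notE01 (by decide) (by decide) (c.E_symm hu')
    · exact c.three hb hu (c.E_symm hu') (by decide) (by decide) (by decide)
    · exact hune' rfl
    · exact c.three hb hu (c.pair5F hu') (by decide) (by decide) (by decide)
    · exact ha hu'
  · have h11 := c.pair5B hu
    obtain ⟨u', hu', hune'⟩ := c.other h11
    have hmem' : ∀ w, (pathGraph 4 □ T₁).Adj ((1:Fin 4),(1:Fin 8)) w →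
        w = (0,1) ∨ w = (2,1) ∨ w = (1,0) ∨ w = (1,5) ∨ w = (1,2) := by decide
    rcases hmem' u' (c.adj_of_E hu') with rfl | rfl | rfl | rfl | rfl
    · exact c.notE01 (by decide) (by decide) (c.E_symm hu')
    · exact c.three hb hu (c.E_symm hu') (by decide) (by decide) (by decide)
    · exact c.three hb hu (c.pair0F hu') (by decide) (by decide) (by decide)
    · exact hune' rfl
    · exact ha hu'
  · exact hune rfl

/-- The row-1 rung from column 1 to column 2 is used by the cycle. -/
lemma col1 : c.E (1,1) (1,2) := by
  by_contra ha
  have hb : ¬ c.E (2,1) (2,2) := fun hb => ha (c.rb_to_ra hb)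
  -- the set of vertices in columns 0, 1, 5 would be closed under the cycle successor
  refine c.closed {v : Fin 4 × Fin 8 | v.2 = 0 ∨ v.2 = 1 ∨ v.2 = 5} ?_
    (v₀ := (0,0)) (w := (0,2)) (by left; rfl) (by simp)
  rintro ⟨i, t⟩ hv
  have hEs := c.E_succ (i, t)
  have hadj := c.adj_of_E hEs
  rcases hv with ht | ht | ht
  · -- leaf column 0: all neighbours are inside
    subst ht
    revert hadj
    have : ∀ (i : Fin 4) w, (pathGraph 4 □ T₁).Adj (i,(0:Fin 8)) w →
        (w.2 = 0 ∨ w.2 = 1 ∨ w.2 = 5) := by decide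
    exact this i _
  · subst ht
    fin_cases i
    · -- (0,1) is full towards (0,0), (0,5)
      rcases c.eq_of_E (c.E_symm (c.leaf0T).2) (c.E_symm (c.leaf5T).2) (by decide) hEs with
        h | h <;> rw [h] <;> simp
    · -- (1,1)
      have hmem' : ∀ w, (pathGraph 4 □ T₁).Adj ((1:Fin 4),(1:Fin 8)) w →
          w = (0,1) ∨ w = (2,1) ∨ w = (1,0) ∨ w = (1,5) ∨ w = (1,2) := by decide
      rcases hmem' _ hadj with h | h | h | h | h
      · exact absurd (h ▸ hEs) (fun hh => c.notE01 (by decide) (by decide) (c.E_symm hh))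
      · rw [h]; simp
      · rw [h]; simp
      · rw [h]; simp
      · exact absurd (h ▸ hEs) ha
    · -- (2,1)
      have hmem' : ∀ w, (pathGraph 4 □ T₁).Adj ((2:Fin 4),(1:Fin 8)) w →
          w = (1,1) ∨ w = (3,1) ∨ w = (2,0) ∨ w = (2,5) ∨ w = (2,2) := by decide
      rcases hmem' _ hadj with h | h | h | h | h
      · rw [h]; simp
      · exact absurd (h ▸ hEs) (fun hh => c.notE31 (by decide) (by decide) (c.E_symm hh))
      · rw [h]; simp
      · rw [h]; simp
      · exact absurd (h ▸ hEs) hb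
    · -- (3,1) is full towards (3,0), (3,5)
      rcases c.eq_of_E (c.E_symm (c.leaf0B).2) (c.E_symm (c.leaf5B).2) (by decide) hEs with
        h | h <;> rw [h] <;> simp
  · subst ht
    revert hadj
    have : ∀ (i : Fin 4) w, (pathGraph 4 □ T₁).Adj (i,(5:Fin 8)) w →
        (w.2 = 0 ∨ w.2 = 1 ∨ w.2 = 5) := by decide
    exact this i _

/-- The row-1 rung from column 3 to column 2 is used by the cycle (by symmetry). -/
lemma col3 : c.E (1,3) (1,2) := by
  have h := (c.map refl8 refl8_bij refl8_adj).col1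
  have e1 : ((1,1) : Fin 4 × Fin 8) = refl8 (1,3) := by decide
  have e2 : ((1,2) : Fin 4 × Fin 8) = refl8 (1,2) := by decide
  rw [e1, e2] at h
  exact c.E_map refl8 refl8_bij refl8_adj h

/-- The edge from `(0,2)` up to `(1,2)` is used by the cycle. -/
lemma mid : c.E (0,2) (1,2) := by
  obtain ⟨u, hu, hune⟩ := c.other (c.E_symm (c.leaf6T).2)
  have hmem : ∀ w, (pathGraph 4 □ T₁).Adj ((0:Fin 4),(2:Fin 8)) w →
      w = (1,2) ∨ w = (0,1) ∨ w = (0,3) ∨ w = (0,6) := by decide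
  rcases hmem u (c.adj_of_E hu) with rfl | rfl | rfl | rfl
  · exact hu
  · exact (c.notE01 (by decide) (by decide) (c.E_symm hu)).elim
  · exact (c.notE03 (by decide) (by decide) (c.E_symm hu)).elim
  · exact (hune rfl).elim

end HamCert

/-- The final contradiction: `(1,2)` would have three cycle edges. -/
lemma HamCert.final (c : HamCert) : False :=
  c.three (c.E_symm c.col1) (c.E_symm c.col3) (c.E_symm c.mid)
    (by decide) (by decide) (by decide)

theorem stmt18 : ¬ (pathGraph 4 □ T₁).IsHamiltonian := by
  intro h
  obtain ⟨c⟩ := exists_cert h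
  exact c.final
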